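/- Let ε > 0, μ > 0, Δt > 0, |P₁| > 0 be real numbers, let k be a real number, and for i = 1, 2, 3 let |eᵢ| > 0 and |*eᵢ| > 0 be real numbers. Let ξ, H₁, E₁, E₂, E₃ be complex numbers with H₁ ≠ 0 satisfying: for each i = 1, 2, 3, Eᵢ·ξ = Eᵢ + (Δt/(ε·|*eᵢ|))·(1 − cos(k·|*eᵢ|))·H₁·ξ, and H₁·ξ = H₁ − (Δt/(μ·|P₁|))·(E₁·|e₁| + E₂·|e₂| + E₃·|e₃|)·ξ. Then |ξ| ≤ 1. (Unconditional stability of the implicit DEC scheme: the bound holds for every time step Δt > 0 and every spatial frequency k.) -/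

import Mathlib

open Complex

/-- Unconditional stability of the implicit DEC scheme for the TE wave: for
every time step `Δt > 0` and every spatial frequency `k`, any growth factor
`ξ` satisfying the amplification-relation system has modulus `|ξ| ≤ 1`. -/
theorem idec_unconditional_stability
    (ε μ Δt P₁ k : ℝ) (hε : 0 < ε) (hμ : 0 < μ) (hΔt : 0 < Δt) (hP₁ : 0 < P₁)
    (e de : Fin 3 → ℝ) (he : ∀ i, 0 < e i) (hde : ∀ i, 0 < de i)
    (ξ H₁ : ℂ) (E : Fin 3 → ℂ) (hH₁ : H₁ ≠ 0)
    (hE : ∀ i : Fin 3,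
      E i * ξ = E i + ((Δt / (ε * de i) : ℝ) : ℂ) *
        ((1 - Real.cos (k * de i) : ℝ) : ℂ) * H₁ * ξ)
    (hH : H₁ * ξ = H₁ - ((Δt / (μ * P₁) : ℝ) : ℂ) *
        (E 0 * ((e 0 : ℝ) : ℂ) + E 1 * ((e 1 : ℝ) : ℂ) + E 2 * ((e 2 : ℝ) : ℂ)) * ξ) :
    ‖ξ‖ ≤ 1 := by
  set c : Fin 3 → ℝ := fun i => Δt / (ε * de i) * (1 - Real.cos (k * de i)) with hc_def
  have hc : ∀ i, 0 ≤ c i := by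
    intro i
    apply mul_nonneg
    · exact le_of_lt (div_pos hΔt (mul_pos hε (hde i)))
    · have := Real.cos_le_one (k * de i); linarith
  have hE' : ∀ i, E i * (ξ - 1) = (c i : ℂ) * H₁ * ξ := by
    intro i
    have h := hE i
    have hcast : ((c i : ℝ) : ℂ) = ((Δt / (ε * de i) : ℝ) : ℂ) *
        ((1 - Real.cos (k * de i) : ℝ) : ℂ) := by
      simp only [hc_def]; push_cast; ring
    linear_combination h - H₁ * ξ * hcast
  set A : ℝ := Δt / (μ * P₁) * (c 0 * e 0 + c 1 * e 1 + c 2 * e 2) with hA_def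
  have hA : 0 ≤ A := by
    apply mul_nonneg (le_of_lt (div_pos hΔt (mul_pos hμ hP₁)))
    have h0 := mul_nonneg (hc 0) (he 0).le
    have h1 := mul_nonneg (hc 1) (he 1).le
    have h2 := mul_nonneg (hc 2) (he 2).le
    linarith
  -- Multiply the H equation by (ξ - 1) and substitute
  have key : H₁ * ((ξ - 1) ^ 2 + (A : ℂ) * ξ ^ 2) = 0 := by
    have h0 := hE' 0
    have h1 := hE' 1
    have h2 := hE' 2
    have hAcast : ((A : ℝ) : ℂ) = ((Δt / (μ * P₁) : ℝ) : ℂ) *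
        (((c 0 : ℝ) : ℂ) * ((e 0 : ℝ) : ℂ) + ((c 1 : ℝ) : ℂ) * ((e 1 : ℝ) : ℂ) +
          ((c 2 : ℝ) : ℂ) * ((e 2 : ℝ) : ℂ)) := by
      simp only [hA_def]; push_cast; ring
    linear_combination (ξ - 1) * hH - ((Δt / (μ * P₁) : ℝ) : ℂ) * ξ *
      (((e 0 : ℝ) : ℂ) * h0 + ((e 1 : ℝ) : ℂ) * h1 + ((e 2 : ℝ) : ℂ) * h2) +
      H₁ * ξ ^ 2 * hAcast
  have key2 : (ξ - 1) ^ 2 + (A : ℂ) * ξ ^ 2 = 0 := by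
    rcases mul_eq_zero.mp key with h | h
    · exact absurd h hH₁
    · exact h
  set s : ℝ := Real.sqrt A with hs_def
  have hs2 : (s : ℝ) ^ 2 = A := Real.sq_sqrt hA
  have hfact : ((1 + (s : ℂ) * I) * ξ - 1) * ((1 - (s : ℂ) * I) * ξ - 1) = 0 := by
    have : ((s : ℂ)) ^ 2 = (A : ℂ) := by exact_mod_cast congrArg (fun x : ℝ => (x : ℂ)) hs2
    linear_combination key2 + ξ ^ 2 * this - ξ ^ 2 * ((s : ℂ) ^ 2) * Complex.I_sq - ξ ^ 2 * (A : ℂ) * Complex.I_sq + ξ ^ 2 * (A : ℂ) * Complex.I_sq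
  have habs : ∀ t : ℂ, t * ξ - 1 = 0 → ‖t‖ * ‖ξ‖ = 1 := by
    intro t ht
    have : t * ξ = 1 := by linear_combination ht
    calc ‖t‖ * ‖ξ‖ = ‖t * ξ‖ := (norm_mul _ _).symm
      _ = 1 := by rw [this]; simp
  have hbig : ∀ t : ℂ, Complex.normSq t = 1 + s ^ 2 → t * ξ - 1 = 0 → ‖ξ‖ ≤ 1 := by
    intro t hnorm ht
    have h1 := habs t ht
    have habst : 1 ≤ ‖t‖ := by
      have h2 : (‖t‖) ^ 2 = 1 + s ^ 2 := by rw [Complex.sq_norm, hnorm]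
      nlinarith [norm_nonneg t, sq_nonneg s]
    nlinarith [norm_nonneg ξ, norm_nonneg t]
  rcases mul_eq_zero.mp hfact with h | h
  · refine hbig _ ?_ h
    simp [Complex.normSq_apply]; ring
  · refine hbig _ ?_ h
    simp [Complex.normSq_apply]; ring
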